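/- (Theorem 2, pair Sobol' index) Let μ be a 2-additive capacity on N with Möbius transform m, and let f^Lo(z) = Σ_{i∈N} m(i) z_i + Σ_{{i,j} ⊆ N} m(i,j) min(z_i, z_j). For every pair {p,q} ⊆ N with p ≠ q, the nonnormalized Sobol' index of {p,q}, namely Var[f^Lo_{p,q}] = ∫_0^1 ∫_0^1 (f^Lo_{p,q}(z_p, z_q))² dz_p dz_q, equals m(p,q)²/90. -/

import Mathlib

open MeasureTheory Finset

/-- The uniform probability measure on the unit cube `[0,1]^n`. -/
noncomputable def unifCube (n : ℕ) : Measure (Fin n → ℝ) :=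
  Measure.pi fun _ => volume.restrict (Set.Icc 0 1)

/-- The Möbius transform of a set function. -/
noncomputable def mobius {n : ℕ} (ξ : Finset (Fin n) → ℝ) (S : Finset (Fin n)) : ℝ :=
  ∑ T ∈ S.powerset, (-1 : ℝ) ^ (S \ T).card * ξ T

/-- The Fourier transform of a set function. -/
noncomputable def fourierT {n : ℕ} (ξ : Finset (Fin n) → ℝ) (S : Finset (Fin n)) : ℝ :=
  (1 / 2 ^ n : ℝ) * ∑ T : Finset (Fin n), (-1 : ℝ) ^ (S ∩ T).card * ξ T

/-- The Banzhaf interaction transform of a set function. -/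
noncomputable def banzhaf {n : ℕ} (ξ : Finset (Fin n) → ℝ) (S : Finset (Fin n)) : ℝ :=
  (1 / 2 : ℝ) ^ (n - S.card) * ∑ K : Finset (Fin n), (-1 : ℝ) ^ (S \ K).card * ξ K

/-- The multilinear (Owen) extension associated with coefficients `m`. -/
noncomputable def fOw {n : ℕ} (m : Finset (Fin n) → ℝ) (x : Fin n → ℝ) : ℝ :=
  ∑ T : Finset (Fin n), m T * ∏ i ∈ T, x i

/-- A capacity: vanishes on the empty set and is monotone. -/
def Capacity {n : ℕ} (μ : Finset (Fin n) → ℝ) : Prop :=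
  μ ∅ = 0 ∧ ∀ S T : Finset (Fin n), S ⊆ T → μ S ≤ μ T

/-- The ANOVA component of `f` associated with the subset `S`. -/
noncomputable def anova {n : ℕ} (f : (Fin n → ℝ) → ℝ) (S : Finset (Fin n))
    (z : Fin n → ℝ) : ℝ :=
  ∑ T ∈ S.powerset, (-1 : ℝ) ^ (S \ T).card *
    ∫ y, f (fun i => if i ∈ T then z i else y i) ∂unifCube n

/-- The Choquet integral (Lovász extension) of a 2-additive capacity with
Möbius transform `m`. -/
noncomputable def fLo {n : ℕ} (m : Finset (Fin n) → ℝ) (z : Fin n → ℝ) : ℝ :=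
  ∑ i, m {i} * z i +
    ∑ i, ∑ j ∈ Finset.univ.filter (fun j => i < j), m {i, j} * min (z i) (z j)
noncomputable def muI : Measure ℝ := volume.restrict (Set.Icc 0 1)

instance : IsProbabilityMeasure (volume.restrict (Set.Icc (0:ℝ) 1)) :=
  ⟨by simp [Real.volume_Icc]⟩

instance : IsProbabilityMeasure muI := by unfold muI; infer_instance

instance unifCube_prob (n : ℕ) : IsProbabilityMeasure (unifCube n) := by
  unfold unifCube; infer_instance

lemma unifCube_eq (n : ℕ) : unifCube n = Measure.pi fun _ => muI := rfl

lemma map_eval {n : ℕ} (p : Fin n) :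
    (unifCube n).map (fun y => y p) = muI := by
  ext s hs
  rw [Measure.map_apply (measurable_pi_apply p) hs]
  have hpre : (fun y : Fin n → ℝ => y p) ⁻¹' s
      = Set.pi Set.univ (fun i => if i = p then s else Set.univ) := by
    ext y
    simp only [Set.mem_preimage, Set.mem_pi, Set.mem_univ, true_implies]
    constructor
    · intro h i; by_cases hip : i = p <;> simp_all
    · intro h; have := h p; simpa using this
  rw [hpre, unifCube_eq, Measure.pi_pi]
  have : ∀ i : Fin n, muI (if i = p then s else Set.univ) = if i = p then muI s else 1 := by
    intro i; split_ifs <;> simp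
  simp only [this]
  rw [← Finset.prod_subset (Finset.subset_univ ({p} : Finset (Fin n)))
      (fun i _ hi => by simp only [Finset.mem_singleton] at hi; simp [hi]),
    Finset.prod_singleton]
  simp

lemma map_pair {n : ℕ} (p q : Fin n) (hpq : p ≠ q) :
    (unifCube n).map (fun y => (y p, y q)) = muI.prod muI := by
  refine (Measure.prod_eq fun s t hs ht => ?_).symm
  rw [Measure.map_apply (by fun_prop) (hs.prod ht)]
  have hpre : (fun y : Fin n → ℝ => (y p, y q)) ⁻¹' (s ×ˢ t)
      = Set.pi Set.univ (fun i => if i = p then s else if i = q then t else Set.univ) := by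
    ext y
    simp only [Set.mem_preimage, Set.mem_prod, Set.mem_pi, Set.mem_univ, true_implies]
    constructor
    · rintro ⟨h1, h2⟩ i
      by_cases hip : i = p <;> by_cases hiq : i = q <;> simp_all
    · intro h
      have h1 := h p; have h2 := h q
      simp [hpq, hpq.symm] at h1 h2
      exact ⟨h1, h2⟩
  rw [hpre, unifCube_eq, Measure.pi_pi]
  have : ∀ i : Fin n, muI (if i = p then s else if i = q then t else Set.univ)
      = if i = p then muI s else if i = q then muI t else 1 := by
    intro i; split_ifs <;> simp
  simp only [this]
  rw [← Finset.prod_subset (Finset.subset_univ ({p, q} : Finset (Fin n)))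
      (fun i _ hi => by
        simp only [Finset.mem_insert, Finset.mem_singleton, not_or] at hi
        simp [hi.1, hi.2]),
    Finset.prod_pair hpq]
  simp [hpq.symm]

lemma integrable_muI {f : ℝ → ℝ} (hf : Continuous f) : Integrable f muI :=
  hf.integrableOn_Icc

lemma integrable_prodI {f : ℝ × ℝ → ℝ} (hf : Continuous f) : Integrable f (muI.prod muI) := by
  unfold muI
  rw [Measure.prod_restrict, ← Measure.volume_eq_prod]
  exact hf.continuousOn.integrableOn_compact (isCompact_Icc.prod isCompact_Icc)

lemma integral_eval {n : ℕ} (p : Fin n) {g : ℝ → ℝ} (hg : AEStronglyMeasurable g muI) :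
    ∫ y, g (y p) ∂unifCube n = ∫ x, g x ∂muI := by
  rw [← map_eval p] at hg ⊢
  exact (integral_map (measurable_pi_apply p).aemeasurable hg).symm

lemma integrable_eval {n : ℕ} (p : Fin n) {g : ℝ → ℝ} (hg : Integrable g muI) :
    Integrable (fun y => g (y p)) (unifCube n) := by
  rw [← map_eval p] at hg
  exact (integrable_map_measure hg.aestronglyMeasurable
    (measurable_pi_apply p).aemeasurable).mp hg

lemma integral_pairEval {n : ℕ} (p q : Fin n) (hpq : p ≠ q) {g : ℝ × ℝ → ℝ}
    (hg : AEStronglyMeasurable g (muI.prod muI)) :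
    ∫ y, g (y p, y q) ∂unifCube n = ∫ z, g z ∂(muI.prod muI) := by
  rw [← map_pair p q hpq] at hg ⊢
  exact (integral_map (by fun_prop) hg).symm

lemma integrable_pair {n : ℕ} (p q : Fin n) (hpq : p ≠ q) {g : ℝ × ℝ → ℝ}
    (hg : Integrable g (muI.prod muI)) :
    Integrable (fun y => g (y p, y q)) (unifCube n) := by
  rw [← map_pair p q hpq] at hg
  exact (integrable_map_measure hg.aestronglyMeasurable (by fun_prop)).mp hg

lemma muI_eq_interval (f : ℝ → ℝ) :
    ∫ x, f x ∂muI = ∫ x in (0:ℝ)..1, f x := by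
  unfold muI
  rw [intervalIntegral.integral_of_le zero_le_one, ← integral_Icc_eq_integral_Ioc]

lemma C_minc (c : ℝ) (hc : c ∈ Set.Icc (0:ℝ) 1) : ∫ x, min c x ∂muI = c - c^2/2 := by
  obtain ⟨hc0, hc1⟩ := hc
  rw [muI_eq_interval]
  have hi1 : IntervalIntegrable (fun x => min c x) volume 0 c :=
    (continuous_const.min continuous_id).intervalIntegrable _ _
  have hi2 : IntervalIntegrable (fun x => min c x) volume c 1 :=
    (continuous_const.min continuous_id).intervalIntegrable _ _
  rw [← intervalIntegral.integral_add_adjacent_intervals hi1 hi2]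
  have e1 : ∫ x in (0:ℝ)..c, min c x = ∫ x in (0:ℝ)..c, x :=
    intervalIntegral.integral_congr fun x hx => by
      rw [Set.uIcc_of_le hc0] at hx; exact min_eq_right hx.2
  have e2 : ∫ x in c..(1:ℝ), min c x = ∫ x in c..(1:ℝ), c :=
    intervalIntegral.integral_congr fun x hx => by
      rw [Set.uIcc_of_le hc1] at hx; exact min_eq_left hx.1
  rw [e1, e2, integral_id, intervalIntegral.integral_const]
  simp; ring

lemma C_min2 : ∫ z : ℝ × ℝ, min z.1 z.2 ∂(muI.prod muI) = 1/3 := by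
  rw [integral_prod _ (integrable_prodI (continuous_fst.min continuous_snd))]
  have : ∀ᵐ x ∂muI, (∫ y, min x y ∂muI) = x - x^2/2 := by
    have h : ∀ᵐ x ∂muI, x ∈ Set.Icc (0:ℝ) 1 := by
      unfold muI; exact ae_restrict_mem measurableSet_Icc
    filter_upwards [h] with x hx
    exact C_minc x hx
  rw [integral_congr_ae this, muI_eq_interval,
    intervalIntegral.integral_sub ((by fun_prop : Continuous fun x : ℝ => x).intervalIntegrable _ _)
      ((by fun_prop : Continuous fun x : ℝ => x^2/2).intervalIntegrable _ _),
    intervalIntegral.integral_div, integral_id, integral_pow]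
  norm_num

lemma U1 {n : ℕ} (p : Fin n) : ∫ y, y p ∂unifCube n = 1/2 := by
  rw [integral_eval p (g := fun x => x) continuous_id.aestronglyMeasurable, muI_eq_interval, integral_id]
  norm_num

lemma U2 {n : ℕ} (p : Fin n) (c : ℝ) (hc : c ∈ Set.Icc (0:ℝ) 1) :
    ∫ y, min c (y p) ∂unifCube n = c - c^2/2 := by
  rw [integral_eval p (g := fun x => min c x) (continuous_const.min continuous_id).aestronglyMeasurable]
  exact C_minc c hc

lemma U3 {n : ℕ} (p q : Fin n) (hpq : p ≠ q) :
    ∫ y, min (y p) (y q) ∂unifCube n = 1/3 := by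
  rw [integral_pairEval p q hpq (g := fun z => min z.1 z.2) ((continuous_fst.min continuous_snd).aestronglyMeasurable)]
  exact C_min2

lemma UI1 {n : ℕ} (p : Fin n) : Integrable (fun y => y p) (unifCube n) :=
  integrable_eval p (integrable_muI continuous_id)

lemma UI2 {n : ℕ} (p : Fin n) (c : ℝ) : Integrable (fun y => min c (y p)) (unifCube n) :=
  integrable_eval p (g := fun x => min c x) (integrable_muI (by fun_prop))

lemma UI3 {n : ℕ} (p q : Fin n) (hpq : p ≠ q) :
    Integrable (fun y => min (y p) (y q)) (unifCube n) :=
  integrable_pair p q hpq (g := fun z => min z.1 z.2)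
    (integrable_prodI (continuous_fst.min continuous_snd))
noncomputable def Ep {n : ℕ} (z : Fin n → ℝ) (T : Finset (Fin n)) (i j : Fin n) : ℝ :=
  if i ∈ T then (if j ∈ T then min (z i) (z j) else z i - (z i)^2/2)
  else (if j ∈ T then z j - (z j)^2/2 else 1/3)

lemma eval_single {n : ℕ} (z : Fin n → ℝ) (T : Finset (Fin n)) (i : Fin n) :
    ∫ y, (if i ∈ T then z i else y i) ∂unifCube n = (if i ∈ T then z i else 1/2) := by
  by_cases hi : i ∈ T <;> simp [hi, U1, integral_const]

lemma int_single {n : ℕ} (z : Fin n → ℝ) (T : Finset (Fin n)) (i : Fin n) :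
    Integrable (fun y => if i ∈ T then z i else y i) (unifCube n) := by
  by_cases hi : i ∈ T <;> simp [hi, UI1, integrable_const]

lemma eval_pairterm {n : ℕ} (z : Fin n → ℝ) (T : Finset (Fin n)) (i j : Fin n)
    (hij : i ≠ j) (hzi : z i ∈ Set.Icc (0:ℝ) 1) (hzj : z j ∈ Set.Icc (0:ℝ) 1) :
    ∫ y, min (if i ∈ T then z i else y i) (if j ∈ T then z j else y j) ∂unifCube n
      = Ep z T i j := by
  unfold Ep
  by_cases hi : i ∈ T <;> by_cases hj : j ∈ T <;> simp only [hi, hj, if_true, if_false]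
  · simp [integral_const]
  · exact U2 j (z i) hzi
  · simp_rw [min_comm]; exact U2 i (z j) hzj
  · exact U3 i j hij

lemma int_pairterm {n : ℕ} (z : Fin n → ℝ) (T : Finset (Fin n)) (i j : Fin n)
    (hij : i ≠ j) :
    Integrable (fun y => min (if i ∈ T then z i else y i) (if j ∈ T then z j else y j))
      (unifCube n) := by
  by_cases hi : i ∈ T <;> by_cases hj : j ∈ T <;> simp only [hi, hj, if_true, if_false]
  · exact integrable_const _
  · exact UI2 j (z i)
  · simp_rw [min_comm]; exact UI2 i (z j)
  · exact UI3 i j hij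

lemma integral_fLo {n : ℕ} (m : Finset (Fin n) → ℝ) (T : Finset (Fin n)) (z : Fin n → ℝ)
    (hz : ∀ i, z i ∈ Set.Icc (0:ℝ) 1) :
    ∫ y, fLo m (fun i => if i ∈ T then z i else y i) ∂unifCube n
      = (∑ i, m {i} * (if i ∈ T then z i else 1/2)) +
        ∑ i, ∑ j ∈ Finset.univ.filter (fun j => i < j), m {i, j} * Ep z T i j := by
  have hA : ∀ i : Fin n, Integrable (fun y => m {i} * (if i ∈ T then z i else y i)) (unifCube n) :=
    fun i => (int_single z T i).const_mul _
  have hB : ∀ i j : Fin n, i < j → Integrable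
      (fun y => m {i, j} * min (if i ∈ T then z i else y i) (if j ∈ T then z j else y j))
      (unifCube n) := fun i j hij => (int_pairterm z T i j (ne_of_lt hij)).const_mul _
  simp only [fLo]
  rw [integral_add (integrable_finset_sum _ fun i _ => hA i)
      (integrable_finset_sum _ fun i _ => integrable_finset_sum _ fun j hj =>
        hB i j (by simpa using (Finset.mem_filter.mp hj).2)),
    integral_finset_sum _ (fun i _ => hA i),
    integral_finset_sum _ (fun i _ => integrable_finset_sum _ fun j hj =>
        hB i j (by simpa using (Finset.mem_filter.mp hj).2))]
  congr 1
  · exact Finset.sum_congr rfl fun i _ => by rw [integral_const_mul, eval_single]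
  · refine Finset.sum_congr rfl fun i _ => ?_
    rw [integral_finset_sum _ (fun j hj =>
      hB i j (by simpa using (Finset.mem_filter.mp hj).2))]
    refine Finset.sum_congr rfl fun j hj => ?_
    rw [integral_const_mul,
      eval_pairterm z T i j (ne_of_lt (by simpa using (Finset.mem_filter.mp hj).2)) (hz i) (hz j)]
lemma combo_zero {n : ℕ} (z : Fin n → ℝ) (p q i j : Fin n) (hpq : p ≠ q) (hij : i ≠ j)
    (h1 : ¬(i = p ∧ j = q)) (h2 : ¬(i = q ∧ j = p)) :
    Ep z ∅ i j - Ep z {q} i j - Ep z {p} i j + Ep z (insert p {q}) i j = 0 := by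
  unfold Ep
  by_cases hip : i = p <;> by_cases hiq : i = q <;> by_cases hjp : j = p <;>
    by_cases hjq : j = q <;>
    simp_all [Finset.mem_insert] <;> ring

lemma double_sum_pair {n : ℕ} (c : Fin n → Fin n → ℝ) (a b : Fin n) (hab : a < b)
    (h0 : ∀ i j, i < j → ¬(i = a ∧ j = b) → c i j = 0) :
    (∑ i, ∑ j ∈ Finset.univ.filter (fun j => i < j), c i j) = c a b :=
  calc (∑ i, ∑ j ∈ Finset.univ.filter (fun j => i < j), c i j)
      = ∑ j ∈ Finset.univ.filter (fun j => a < j), c a j :=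
        Finset.sum_eq_single_of_mem a (Finset.mem_univ a) (fun i _ hia =>
          Finset.sum_eq_zero fun j hj =>
            h0 i j (by simpa using (Finset.mem_filter.mp hj).2) (fun h => hia h.1))
    _ = c a b :=
        Finset.sum_eq_single_of_mem b (by simp [hab]) (fun j hj hjb =>
          h0 a j (by simpa using (Finset.mem_filter.mp hj).2) (fun h => hjb h.2))

lemma anova_fLo {n : ℕ} (m : Finset (Fin n) → ℝ) (p q : Fin n) (hpq : p ≠ q)
    (z : Fin n → ℝ) (hz : ∀ i, z i ∈ Set.Icc (0:ℝ) 1) :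
    anova (fLo m) {p, q} z
      = m {p, q} * (min (z p) (z q) - z p + (z p)^2/2 - z q + (z q)^2/2 + 1/3) := by
  unfold anova
  have hqP : ({q} : Finset (Fin n)).powerset = {∅, {q}} := by
    ext U; simp [Finset.subset_singleton_iff]
  rw [show ({p, q} : Finset (Fin n)) = insert p {q} from rfl,
    Finset.sum_powerset_insert (by simp [hpq]), hqP,
    Finset.sum_insert (by simpa using (Finset.singleton_ne_empty q).symm), Finset.sum_singleton,
    Finset.sum_insert (by simpa using (Finset.singleton_ne_empty q).symm), Finset.sum_singleton,
    show (insert p (∅ : Finset (Fin n))) = {p} from by simp]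
  have c0 : ((insert p {q} : Finset (Fin n)) \ ∅).card = 2 := by
    simp [Finset.card_insert_of_notMem, hpq]
  have cq : ((insert p {q} : Finset (Fin n)) \ {q}).card = 1 := by
    have : (insert p {q} : Finset (Fin n)) \ {q} = {p} := by
      ext i
      simp only [Finset.mem_sdiff, Finset.mem_insert, Finset.mem_singleton]
      constructor
      · rintro ⟨h1, h2⟩
        rcases h1 with h | h
        · exact h
        · exact absurd h h2
      · rintro rfl; exact ⟨Or.inl rfl, hpq⟩
    rw [this, Finset.card_singleton]
  have cp : ((insert p {q} : Finset (Fin n)) \ {p}).card = 1 := by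
    have : (insert p {q} : Finset (Fin n)) \ {p} = {q} := by
      ext i
      simp only [Finset.mem_sdiff, Finset.mem_insert, Finset.mem_singleton]
      constructor
      · rintro ⟨h1, h2⟩
        rcases h1 with h | h
        · exact absurd h h2
        · exact h
      · rintro rfl; exact ⟨Or.inr rfl, fun h => hpq h.symm⟩
    rw [this, Finset.card_singleton]
  have cpq : ((insert p {q} : Finset (Fin n)) \ insert p {q}).card = 0 := by
    simp
  rw [c0, cq, cp, cpq,
    integral_fLo m ∅ z hz, integral_fLo m {q} z hz, integral_fLo m {p} z hz,
    integral_fLo m (insert p {q}) z hz]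
  have hA : (∑ i, m {i} * (if i ∈ (∅ : Finset (Fin n)) then z i else 1/2))
      - (∑ i, m {i} * (if i ∈ ({q} : Finset (Fin n)) then z i else 1/2))
      - (∑ i, m {i} * (if i ∈ ({p} : Finset (Fin n)) then z i else 1/2))
      + (∑ i, m {i} * (if i ∈ (insert p {q} : Finset (Fin n)) then z i else 1/2)) = 0 := by
    rw [← Finset.sum_sub_distrib, ← Finset.sum_sub_distrib, ← Finset.sum_add_distrib]
    apply Finset.sum_eq_zero
    intro i _
    by_cases hip : i = p <;> by_cases hiq : i = q <;>
      simp_all [Finset.mem_insert] <;> ring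
  have hB : (∑ i, ∑ j ∈ Finset.univ.filter (fun j => i < j), m {i, j} * Ep z ∅ i j)
      - (∑ i, ∑ j ∈ Finset.univ.filter (fun j => i < j), m {i, j} * Ep z {q} i j)
      - (∑ i, ∑ j ∈ Finset.univ.filter (fun j => i < j), m {i, j} * Ep z {p} i j)
      + (∑ i, ∑ j ∈ Finset.univ.filter (fun j => i < j), m {i, j} * Ep z (insert p {q}) i j)
      = m {p, q} * (min (z p) (z q) - z p + (z p)^2/2 - z q + (z q)^2/2 + 1/3) := by
    rw [← Finset.sum_sub_distrib, ← Finset.sum_sub_distrib, ← Finset.sum_add_distrib]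
    have hmerge : ∀ i ∈ (Finset.univ : Finset (Fin n)),
        ((∑ j ∈ Finset.univ.filter (fun j => i < j), m {i, j} * Ep z ∅ i j)
          - (∑ j ∈ Finset.univ.filter (fun j => i < j), m {i, j} * Ep z {q} i j)
          - (∑ j ∈ Finset.univ.filter (fun j => i < j), m {i, j} * Ep z {p} i j)
          + (∑ j ∈ Finset.univ.filter (fun j => i < j), m {i, j} * Ep z (insert p {q}) i j))
        = ∑ j ∈ Finset.univ.filter (fun j => i < j),
            m {i, j} * (Ep z ∅ i j - Ep z {q} i j - Ep z {p} i j + Ep z (insert p {q}) i j) := by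
      intro i _
      rw [← Finset.sum_sub_distrib, ← Finset.sum_sub_distrib, ← Finset.sum_add_distrib]
      exact Finset.sum_congr rfl fun j _ => by ring
    rw [Finset.sum_congr rfl hmerge]
    rcases hpq.lt_or_gt with h | h
    · rw [double_sum_pair _ p q h (fun i j hij hne => by
        rw [combo_zero z p q i j hpq (ne_of_lt hij) hne
          (by rintro ⟨rfl, rfl⟩; exact absurd hij (not_lt.mpr (le_of_lt h))), mul_zero])]
      have : Ep z ∅ p q - Ep z {q} p q - Ep z {p} p q + Ep z (insert p {q}) p q
          = min (z p) (z q) - z p + (z p)^2/2 - z q + (z q)^2/2 + 1/3 := by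
        unfold Ep
        simp [hpq, hpq.symm]
        ring
      rw [this]
    · rw [double_sum_pair _ q p h (fun i j hij hne => by
        rw [combo_zero z p q i j hpq (ne_of_lt hij)
          (by rintro ⟨rfl, rfl⟩; exact absurd hij (not_lt.mpr (le_of_lt h))) hne, mul_zero])]
      have h1 : ({q, p} : Finset (Fin n)) = {p, q} := Finset.pair_comm q p
      have : Ep z ∅ q p - Ep z {q} q p - Ep z {p} q p + Ep z (insert p {q}) q p
          = min (z p) (z q) - z p + (z p)^2/2 - z q + (z q)^2/2 + 1/3 := by
        unfold Ep
        simp [hpq, hpq.symm, min_comm (z q) (z p)]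
        ring
      rw [this, h1]
  have e2 : ((-1:ℝ)) ^ (2:ℕ) = 1 := by norm_num
  have e1 : ((-1:ℝ)) ^ (1:ℕ) = -1 := by norm_num
  have e0 : ((-1:ℝ)) ^ (0:ℕ) = 1 := by norm_num
  rw [e2, e1, e0]
  linarith [hA, hB]
lemma integral_poly4 (a b k0 k1 k2 k3 k4 : ℝ) :
    ∫ t in a..b, (k0 + k1*t + k2*t^2 + k3*t^3 + k4*t^4)
      = (k0*b + k1*b^2/2 + k2*b^3/3 + k3*b^4/4 + k4*b^5/5)
        - (k0*a + k1*a^2/2 + k2*a^3/3 + k3*a^4/4 + k4*a^5/5) := by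
  apply intervalIntegral.integral_eq_sub_of_hasDerivAt
  · intro t _
    have h : HasDerivAt (fun t : ℝ => k0*t + k1*t^2/2 + k2*t^3/3 + k3*t^4/4 + k4*t^5/5)
        (k0*1 + k1*(2*t^1)/2 + k2*(3*t^2)/3 + k3*(4*t^3)/4 + k4*(5*t^4)/5) t := by
      exact ((((((hasDerivAt_id t).const_mul k0).add
        (((hasDerivAt_pow 2 t).const_mul k1).div_const 2)).add
        (((hasDerivAt_pow 3 t).const_mul k2).div_const 3)).add
        (((hasDerivAt_pow 4 t).const_mul k3).div_const 4)).add
        (((hasDerivAt_pow 5 t).const_mul k4).div_const 5))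
    refine h.congr_deriv ?_
    push_cast
    ring
  · exact ((by fun_prop : Continuous fun t : ℝ =>
      k0 + k1*t + k2*t^2 + k3*t^3 + k4*t^4)).intervalIntegrable _ _

lemma final_calc (c : ℝ) :
    (∫ s in (0:ℝ)..1, ∫ t in (0:ℝ)..1,
        (c * (min s t - s + s^2/2 - t + t^2/2 + 1/3))^2) = c^2/90 := by
  have hcont : ∀ s : ℝ, Continuous fun t : ℝ =>
      (c * (min s t - s + s^2/2 - t + t^2/2 + 1/3))^2 := fun s => by
    apply Continuous.pow
    apply Continuous.mul continuous_const
    have : Continuous fun t : ℝ => min s t := continuous_const.min continuous_id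
    fun_prop
  have inner : ∀ s ∈ Set.Icc (0:ℝ) 1,
      (∫ t in (0:ℝ)..1, (c * (min s t - s + s^2/2 - t + t^2/2 + 1/3))^2)
        = c^2 * (1/45 - s^2/3 + 2*s^3/3 - s^4/3) := by
    intro s hs
    obtain ⟨hs0, hs1⟩ := hs
    rw [← intervalIntegral.integral_add_adjacent_intervals
      ((hcont s).intervalIntegrable 0 s) ((hcont s).intervalIntegrable s 1)]
    have e1 : (∫ t in (0:ℝ)..s, (c * (min s t - s + s^2/2 - t + t^2/2 + 1/3))^2)
        = ∫ t in (0:ℝ)..s, (c^2*(s^2/2 - s + 1/3)^2 + 0*t + (c^2*(s^2/2 - s + 1/3))*t^2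
            + 0*t^3 + (c^2/4)*t^4) := by
      apply intervalIntegral.integral_congr
      intro t ht
      rw [Set.uIcc_of_le hs0] at ht
      simp only [min_eq_right ht.2]
      ring
    have e2 : (∫ t in s..(1:ℝ), (c * (min s t - s + s^2/2 - t + t^2/2 + 1/3))^2)
        = ∫ t in s..(1:ℝ), (c^2*(s^2/2 + 1/3)^2 + (-2*c^2*(s^2/2 + 1/3))*t
            + (c^2*(s^2/2 + 1/3) + c^2)*t^2 + (-c^2)*t^3 + (c^2/4)*t^4) := by
      apply intervalIntegral.integral_congr
      intro t ht
      rw [Set.uIcc_of_le hs1] at ht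
      simp only [min_eq_left ht.1]
      ring
    rw [e1, e2, integral_poly4, integral_poly4]
    ring
  rw [intervalIntegral.integral_congr (g := fun s => c^2 * (1/45 - s^2/3 + 2*s^3/3 - s^4/3))
    (fun s hs => inner s (by rwa [Set.uIcc_of_le zero_le_one] at hs))]
  have : (∫ s in (0:ℝ)..1, c^2 * (1/45 - s^2/3 + 2*s^3/3 - s^4/3))
      = ∫ s in (0:ℝ)..1, ((c^2/45) + 0*s + (-c^2/3)*s^2 + (2*c^2/3)*s^3 + (-c^2/3)*s^4) := by
    apply intervalIntegral.integral_congr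
    intro s _
    ring
  rw [this, integral_poly4]
  ring
/-- Theorem 2 (pair Sobol' index): `Var[f^Lo_{p,q}] = m(p,q)²/90`. -/
theorem sobol_fLo_pair (n : ℕ) (μ : Finset (Fin n) → ℝ) (hμ : Capacity μ)
    (h2 : ∀ T : Finset (Fin n), 2 < T.card → mobius μ T = 0)
    (p q : Fin n) (hpq : p ≠ q) :
    (∫ s in (0 : ℝ)..1, ∫ t in (0 : ℝ)..1,
        (anova (fLo (mobius μ)) {p, q} (fun i => if i = p then s else t)) ^ 2) =
      (mobius μ {p, q}) ^ 2 / 90 := by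
  have key : ∀ s ∈ Set.Icc (0:ℝ) 1, ∀ t ∈ Set.Icc (0:ℝ) 1,
      anova (fLo (mobius μ)) {p, q} (fun i => if i = p then s else t)
        = mobius μ {p, q} * (min s t - s + s^2/2 - t + t^2/2 + 1/3) := by
    intro s hs t ht
    have hz : ∀ i, (fun i => if i = p then s else t) i ∈ Set.Icc (0:ℝ) 1 := fun i => by
      by_cases h : i = p <;> simp [h, hs, ht]
    rw [anova_fLo (mobius μ) p q hpq _ hz]
    simp [Ne.symm hpq]
  rw [← final_calc (mobius μ {p, q})]
  apply intervalIntegral.integral_congr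
  intro s hs
  rw [Set.uIcc_of_le zero_le_one] at hs
  simp only
  apply intervalIntegral.integral_congr
  intro t ht
  rw [Set.uIcc_of_le zero_le_one] at ht
  simp only
  rw [key s hs t ht]
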